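/- arXiv:2010.05315 — 6 statements merged into one kernel-verified Lean document; each statement's English description precedes it below -/
import Mathlib

section
/- Let d be a positive integer, let M_Q, M_K ≥ 0, and let q, k ∈ ℝ^d satisfy ‖q‖₂ ≤ M_Q and ‖k‖₂ ≤ M_K. Then the asymmetrically transformed vectors satisfy ‖F(q) − G(k)‖₂² = 2·(M_Q² + M_K² − ⟨q, k⟩), where ⟨·,·⟩ is the Euclidean inner product. In particular, the squared Euclidean distance of the transformed vectors depends only on the inner product ⟨q, k⟩ and decreases linearly in it. -/
open Finset

/-- The asymmetric transformation `F` applied to a query vector: appends `0` and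
`√(M_Q² + M_K² − ‖q‖₂²)` to `q`. -/
noncomputable def asymF (d : ℕ) (MQ MK : ℝ) (q : Fin d → ℝ) : Fin (d + 2) → ℝ :=
  Fin.append q ![0, Real.sqrt (MQ ^ 2 + MK ^ 2 - ∑ i, q i ^ 2)]

/-- The asymmetric transformation `G` applied to a key vector: appends
`√(M_Q² + M_K² − ‖k‖₂²)` and `0` to `k`. -/
noncomputable def asymG (d : ℕ) (MQ MK : ℝ) (k : Fin d → ℝ) : Fin (d + 2) → ℝ :=
  Fin.append k ![Real.sqrt (MQ ^ 2 + MK ^ 2 - ∑ i, k i ^ 2), 0]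

theorem asym_dist_sq (d : ℕ) (hd : 0 < d) (MQ MK : ℝ) (hMQ : 0 ≤ MQ) (hMK : 0 ≤ MK)
    (q k : Fin d → ℝ)
    (hq : Real.sqrt (∑ i, q i ^ 2) ≤ MQ) (hk : Real.sqrt (∑ i, k i ^ 2) ≤ MK) :
    ∑ i, (asymF d MQ MK q i - asymG d MQ MK k i) ^ 2
      = 2 * (MQ ^ 2 + MK ^ 2 - ∑ i, q i * k i) := by
  have hSq : (0:ℝ) ≤ ∑ i, q i ^ 2 := Finset.sum_nonneg fun i _ => sq_nonneg _
  have hSk : (0:ℝ) ≤ ∑ i, k i ^ 2 := Finset.sum_nonneg fun i _ => sq_nonneg _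
  have hq2 : ∑ i, q i ^ 2 ≤ MQ ^ 2 := by
    nlinarith [Real.sq_sqrt hSq, Real.sqrt_nonneg (∑ i, q i ^ 2)]
  have hk2 : ∑ i, k i ^ 2 ≤ MK ^ 2 := by
    nlinarith [Real.sq_sqrt hSk, Real.sqrt_nonneg (∑ i, k i ^ 2)]
  have h1 : Real.sqrt (MQ ^ 2 + MK ^ 2 - ∑ i, q i ^ 2) ^ 2
      = MQ ^ 2 + MK ^ 2 - ∑ i, q i ^ 2 := Real.sq_sqrt (by nlinarith)
  have h2 : Real.sqrt (MQ ^ 2 + MK ^ 2 - ∑ i, k i ^ 2) ^ 2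
      = MQ ^ 2 + MK ^ 2 - ∑ i, k i ^ 2 := Real.sq_sqrt (by nlinarith)
  have hexp : ∑ i, (q i - k i) ^ 2
      = (∑ i, q i ^ 2) - 2 * (∑ i, q i * k i) + ∑ i, k i ^ 2 := by
    rw [Finset.mul_sum, ← Finset.sum_sub_distrib, ← Finset.sum_add_distrib]
    exact Finset.sum_congr rfl fun i _ => by ring
  simp only [asymF, asymG]
  rw [Fin.sum_univ_add]
  simp only [Fin.append_left, Fin.append_right, Fin.sum_univ_two,
    Matrix.cons_val_zero, Matrix.cons_val_one, Matrix.head_cons]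
  nlinarith [hexp, h1, h2]
end

section
/- Let d be a positive integer, let M_Q, M_K ≥ 0, let q₁, q₂ ∈ ℝ^d satisfy ‖q₁‖₂ ≤ M_Q and ‖q₂‖₂ ≤ M_Q, and let k ∈ ℝ^d satisfy ‖k‖₂ ≤ M_K. Then ⟨q₁, k⟩ ≤ ⟨q₂, k⟩ if and only if ‖F(q₂) − G(k)‖₂ ≤ ‖F(q₁) − G(k)‖₂. Thus maximizing the inner product with a key over a set of queries is equivalent to minimizing the Euclidean distance of the transformed vectors. -/
open Finset

theorem asym_mips_iff_nns (d : ℕ) (hd : 0 < d) (MQ MK : ℝ) (hMQ : 0 ≤ MQ) (hMK : 0 ≤ MK)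
    (q₁ q₂ k : Fin d → ℝ)
    (hq₁ : Real.sqrt (∑ i, q₁ i ^ 2) ≤ MQ) (hq₂ : Real.sqrt (∑ i, q₂ i ^ 2) ≤ MQ)
    (hk : Real.sqrt (∑ i, k i ^ 2) ≤ MK) :
    (∑ i, q₁ i * k i ≤ ∑ i, q₂ i * k i) ↔
      Real.sqrt (∑ i, (asymF d MQ MK q₂ i - asymG d MQ MK k i) ^ 2)
        ≤ Real.sqrt (∑ i, (asymF d MQ MK q₁ i - asymG d MQ MK k i) ^ 2) := by
  have sqnn : ∀ v : Fin d → ℝ, (0:ℝ) ≤ ∑ i, v i ^ 2 := fun v =>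
    Finset.sum_nonneg fun i _ => sq_nonneg _
  have hS : ∀ v : Fin d → ℝ, ∀ M : ℝ, 0 ≤ M → Real.sqrt (∑ i, v i ^ 2) ≤ M →
      (∑ i, v i ^ 2) ≤ M ^ 2 := by
    intro v M hM h
    have := pow_le_pow_left₀ (Real.sqrt_nonneg _) h 2
    rwa [Real.sq_sqrt (sqnn v)] at this
  have hq₁' := hS q₁ MQ hMQ hq₁
  have hq₂' := hS q₂ MQ hMQ hq₂
  have hk' := hS k MK hMK hk
  have key : ∀ q : Fin d → ℝ, (∑ i, q i ^ 2) ≤ MQ ^ 2 →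
      (∑ i, (asymF d MQ MK q i - asymG d MQ MK k i) ^ 2)
        = 2 * (MQ ^ 2 + MK ^ 2) - 2 * ∑ i, q i * k i := by
    intro q hq
    have h1 : (0:ℝ) ≤ MQ ^ 2 + MK ^ 2 - ∑ i, q i ^ 2 := by nlinarith [sq_nonneg MK]
    have h2 : (0:ℝ) ≤ MQ ^ 2 + MK ^ 2 - ∑ i, k i ^ 2 := by nlinarith [sq_nonneg MQ]
    simp only [asymF, asymG]
    rw [Fin.sum_univ_add]
    simp only [Fin.append_left, Fin.append_right, Fin.sum_univ_two,
      Matrix.cons_val_zero, Matrix.cons_val_one, Matrix.head_cons]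
    have e1 : (0 - Real.sqrt (MQ ^ 2 + MK ^ 2 - ∑ i, k i ^ 2)) ^ 2
        = MQ ^ 2 + MK ^ 2 - ∑ i, k i ^ 2 := by
      rw [zero_sub, neg_sq, Real.sq_sqrt h2]
    have e2 : (Real.sqrt (MQ ^ 2 + MK ^ 2 - ∑ i, q i ^ 2) - 0) ^ 2
        = MQ ^ 2 + MK ^ 2 - ∑ i, q i ^ 2 := by
      rw [sub_zero, Real.sq_sqrt h1]
    rw [e1, e2]
    have e3 : ∑ i, (q i - k i) ^ 2
        = (∑ i, q i ^ 2) + (∑ i, k i ^ 2) - 2 * ∑ i, q i * k i := by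
      rw [Finset.mul_sum, ← Finset.sum_add_distrib, ← Finset.sum_sub_distrib]
      apply Finset.sum_congr rfl
      intro i _
      ring
    rw [e3]
    ring
  rw [key q₁ hq₁', key q₂ hq₂']
  have n2 : (0:ℝ) ≤ 2 * (MQ ^ 2 + MK ^ 2) - 2 * ∑ i, q₁ i * k i := by
    have := key q₁ hq₁'
    rw [← this]
    exact Finset.sum_nonneg fun i _ => sq_nonneg _
  rw [Real.sqrt_le_sqrt_iff n2]
  constructor <;> intro h <;> linarith
end

section
/- Let q_D, q_C be real numbers with 0 < q_C ≤ q_D, let 0 < ε < 1, and assume q_D·(1−ε) < q_C. Define R = 2/(q_D·q_C) − 1/q_C² and ε′ = 1/(1−ε)² − 1. Then (1−ε′)/q_D² < R < (1+ε′)/q_D². -/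
theorem R_bound (qD qC ε : ℝ) (hqC : 0 < qC) (hle : qC ≤ qD)
    (hε0 : 0 < ε) (hε1 : ε < 1) (h : qD * (1 - ε) < qC) :
    (1 - (1 / (1 - ε) ^ 2 - 1)) / qD ^ 2 < 2 / (qD * qC) - 1 / qC ^ 2 ∧
    2 / (qD * qC) - 1 / qC ^ 2 < (1 + (1 / (1 - ε) ^ 2 - 1)) / qD ^ 2 := by
  have hqD : 0 < qD := lt_of_lt_of_le hqC hle
  have h1 : 0 < 1 - ε := by linarith
  have key : (2 / (qD * qC) - 1 / qC ^ 2) = 1 / qD ^ 2 - (1/qC - 1/qD)^2 := by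
    field_simp; ring
  have hd : 1/qC - 1/qD < ε / (qD * (1-ε)) := by
    rw [div_sub_div _ _ (ne_of_gt hqC) (ne_of_gt hqD),
      div_lt_div_iff₀ (by positivity) (by positivity)]
    nlinarith
  have hd0 : 0 ≤ 1/qC - 1/qD := by
    rw [sub_nonneg]; exact one_div_le_one_div_of_le hqC hle
  have haux : (1/(1-ε)^2 - 1) * (1-ε)^2 = 2*ε - ε^2 := by field_simp; ring
  have hε'pos : 0 < 1 / (1 - ε) ^ 2 - 1 := by nlinarith [sq_nonneg (1-ε)]
  have hε' : (1/qC - 1/qD)^2 < (1 / (1 - ε) ^ 2 - 1) / qD ^ 2 := by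
    have h2 : (1/qC - 1/qD)^2 < (ε / (qD * (1-ε)))^2 := by
      apply sq_lt_sq' (by nlinarith [div_pos hε0 (mul_pos hqD h1)]) hd
    refine h2.trans_le ?_
    rw [div_pow, div_le_div_iff₀ (by positivity) (by positivity)]
    nlinarith [sq_nonneg ε, sq_nonneg qD, mul_pos (mul_pos hε0 hε0) (mul_pos hqD hqD)]
  have heq : (1 - (1 / (1 - ε) ^ 2 - 1)) / qD ^ 2
      = 1 / qD ^ 2 - (1 / (1 - ε) ^ 2 - 1) / qD ^ 2 := by ring
  have heq2 : (1 + (1 / (1 - ε) ^ 2 - 1)) / qD ^ 2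
      = 1 / qD ^ 2 + (1 / (1 - ε) ^ 2 - 1) / qD ^ 2 := by ring
  have hpos : 0 < (1 / (1 - ε) ^ 2 - 1) / qD ^ 2 := by positivity
  constructor
  · rw [key, heq]; linarith
  · rw [key, heq2]; nlinarith [sq_nonneg (1/qC - 1/qD)]
end

section
/- Let S be a finite nonempty set and let F, G : S → ℝ with G(c) ≥ 0 for all c ∈ S. Let ε′ ≥ 0 and θ₁, θ₂ > 0, and assume: (i) (1−ε′)·G(c) ≤ F(c) ≤ (1+ε′)·G(c) for all c ∈ S; (ii) for all c, c′ ∈ S, if F(c) > F(c′) then F(c) − F(c′) ≥ θ₂; (iii) G(c) + G(c′) ≤ θ₁ for all c, c′ ∈ S; and (iv) 2ε′θ₁ < θ₂. Then every maximizer of G over S is also a maximizer of F over S. -/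
open Finset

theorem argmax_transfer {ι : Type*} (S : Finset ι) (hS : S.Nonempty)
    (F G : ι → ℝ) (hG : ∀ c ∈ S, 0 ≤ G c)
    (ε' θ₁ θ₂ : ℝ) (hε' : 0 ≤ ε') (hθ₁ : 0 < θ₁) (hθ₂ : 0 < θ₂)
    (hsandwich : ∀ c ∈ S, (1 - ε') * G c ≤ F c ∧ F c ≤ (1 + ε') * G c)
    (hgap : ∀ c ∈ S, ∀ c' ∈ S, F c' < F c → θ₂ ≤ F c - F c')
    (hbound : ∀ c ∈ S, ∀ c' ∈ S, G c + G c' ≤ θ₁)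
    (hsmall : 2 * ε' * θ₁ < θ₂) :
    ∀ c ∈ S, (∀ c' ∈ S, G c' ≤ G c) → (∀ c' ∈ S, F c' ≤ F c) := by
  intro c hc hmax c' hc'
  by_contra h
  push_neg at h
  have hg := hgap c' hc' c hc h
  have h1 := (hsandwich c hc).1
  have h2 := (hsandwich c' hc').2
  have hGc' := hmax c' hc'
  have hb := hbound c hc c' hc'
  have hεθ : 0 ≤ ε' * θ₁ := mul_nonneg hε' hθ₁.le
  nlinarith [hG c hc, hG c' hc']
end

section
/- Let P be a real n×m matrix, and let a clustering assign to each row i a nonempty subset S_i ⊆ {1,…,m} of columns in the same cluster as row i. For each row i let q_{D,i} = Σ_{j=1}^m e^{P_{ij}} and q_{C,i} = Σ_{j∈S_i} e^{P_{ij}}, and let σ(P) denote row-wise softmax of P and σ_C(P) the matrix with entries e^{P_{ij}}/q_{C,i} for j ∈ S_i and 0 for j ∉ S_i. Then ‖σ_C(P) − σ(P)‖_F² = Σ_{i=1}^n Σ_{j=1}^m (e^{P_{ij}}/q_{D,i})² − Σ_{i=1}^n Σ_{j∈S_i} e^{2P_{ij}}·(2/(q_{D,i}·q_{C,i}) − 1/q_{C,i}²).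 Consequently, minimizing ‖σ_C(P) − σ(P)‖_F² over a family of clusterings is equivalent to maximizing Σ_{i=1}^n Σ_{j∈S_i} e^{2P_{ij}}·(2/(q_{D,i}·q_{C,i}) − 1/q_{C,i}²). -/
open Finset

/-- Row-wise softmax of a real matrix. -/
noncomputable def rowSoftmax {n m : ℕ} (P : Matrix (Fin n) (Fin m) ℝ) :
    Matrix (Fin n) (Fin m) ℝ :=
  fun i j => Real.exp (P i j) / ∑ j', Real.exp (P i j')

/-- Within-cluster attention matrix: row `i` attends only to the columns in `S i`. -/
noncomputable def clusterSoftmax {n m : ℕ} (P : Matrix (Fin n) (Fin m) ℝ)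
    (S : Fin n → Finset (Fin m)) : Matrix (Fin n) (Fin m) ℝ :=
  fun i j => if j ∈ S i then Real.exp (P i j) / ∑ j' ∈ S i, Real.exp (P i j') else 0

/-- Squared Frobenius norm of a real matrix. -/
def frobSq {n m : ℕ} (A : Matrix (Fin n) (Fin m) ℝ) : ℝ :=
  ∑ i, ∑ j, (A i j) ^ 2

/-- The within-cluster objective `Σ_i Σ_{j ∈ S i} e^{2 P i j} (2/(q_{D,i} q_{C,i}) − 1/q_{C,i}²)`. -/
noncomputable def clusterObjective {n m : ℕ} (P : Matrix (Fin n) (Fin m) ℝ)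
    (S : Fin n → Finset (Fin m)) : ℝ :=
  ∑ i, ∑ j ∈ S i, Real.exp (2 * P i j) *
    (2 / ((∑ j', Real.exp (P i j')) * ∑ j' ∈ S i, Real.exp (P i j'))
      - 1 / (∑ j' ∈ S i, Real.exp (P i j')) ^ 2)

theorem cluster_softmax_error_and_min_iff_max {n m : ℕ}
    (P : Matrix (Fin n) (Fin m) ℝ) :
    (∀ S : Fin n → Finset (Fin m), (∀ i, (S i).Nonempty) →
      frobSq (clusterSoftmax P S - rowSoftmax P)
        = (∑ i, ∑ j, (Real.exp (P i j) / ∑ j', Real.exp (P i j')) ^ 2)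
            - clusterObjective P S) ∧
    (∀ (𝒞 : Set (Fin n → Finset (Fin m))), (∀ S ∈ 𝒞, ∀ i, (S i).Nonempty) →
      ∀ S ∈ 𝒞,
        ((∀ S' ∈ 𝒞, frobSq (clusterSoftmax P S - rowSoftmax P)
            ≤ frobSq (clusterSoftmax P S' - rowSoftmax P)) ↔
          (∀ S' ∈ 𝒞, clusterObjective P S' ≤ clusterObjective P S))) := by
  have key : ∀ S : Fin n → Finset (Fin m),
      frobSq (clusterSoftmax P S - rowSoftmax P)
        = (∑ i, ∑ j, (Real.exp (P i j) / ∑ j', Real.exp (P i j')) ^ 2)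
            - clusterObjective P S := by
    intro S
    unfold frobSq clusterSoftmax rowSoftmax clusterObjective
    rw [← Finset.sum_sub_distrib]
    refine Finset.sum_congr rfl fun i _ => ?_
    have h1 : ∀ j : Fin m,
        (((fun i j => if j ∈ S i then Real.exp (P i j) / ∑ j' ∈ S i, Real.exp (P i j') else 0)
          - fun i j => Real.exp (P i j) / ∑ j', Real.exp (P i j')) i j) ^ 2
        = (Real.exp (P i j) / ∑ j', Real.exp (P i j')) ^ 2
          - (if j ∈ S i then Real.exp (2 * P i j) *
              (2 / ((∑ j', Real.exp (P i j')) * ∑ j' ∈ S i, Real.exp (P i j'))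
                - 1 / (∑ j' ∈ S i, Real.exp (P i j')) ^ 2) else 0) := by
      intro j
      simp only [Matrix.sub_apply, two_mul, Real.exp_add]
      by_cases h : j ∈ S i <;> simp [h]
      ring
    refine (Finset.sum_congr rfl fun j _ => h1 j).trans ?_
    rw [Finset.sum_sub_distrib,
      Finset.sum_ite_mem, Finset.univ_inter]
  refine ⟨fun S _ => key S, fun 𝒞 _ S _ => ?_⟩
  constructor <;> intro h S' hS' <;> have := h S' hS' <;>
    rw [key S, key S'] at * <;> linarith
end

section
/- Let K be a finite set, s : K → ℝ a nonnegative weight function with nonempty support K_q = {k ∈ K : s(k) > 0}, and v : K → ℝ^d a value function. Let K₁,…,K_H be subsets of K such that every k ∈ K_q belongs to exactly N of the sets K₁,…,K_H for some fixed integer N ≥ 1, and such that Σ_{k∈K_h} s(k) > 0 for every h. Define o^h = Σ_{k∈K_h} (s(k)/Σ_{k′∈K_h} s(k′))·v(k) and a_h = (Σ_{k∈K_h} s(k)) / (Σ_{n=1}^H Σ_{k′∈K_n} s(k′)). Then the merged output equals the dense attention output: Σ_{h=1}^H a_h·o^h = Σ_{k∈K_q} (s(k)/Σ_{k′∈K_q}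 s(k′))·v(k). -/
open Finset

lemma swap_count_smul {ι : Type*} [DecidableEq ι] {M : Type*} [AddCommMonoid M]
    (K : Finset ι) (H : ℕ) (Ks : Fin H → Finset ι) (hKs : ∀ h, Ks h ⊆ K) (g : ι → M) :
    ∑ h : Fin H, ∑ k ∈ Ks h, g k
      = ∑ k ∈ K, (((Finset.univ : Finset (Fin H)).filter (fun h => k ∈ Ks h)).card) • g k := by
  have h1 : ∀ h : Fin H, ∑ k ∈ Ks h, g k = ∑ k ∈ K, if k ∈ Ks h then g k else 0 := by
    intro h
    rw [Finset.sum_ite_mem, Finset.inter_eq_right.mpr (hKs h)]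
  simp_rw [h1]
  rw [Finset.sum_comm]
  refine Finset.sum_congr rfl fun k _ => ?_
  rw [← Finset.sum_filter, Finset.sum_const]

theorem merged_rounds_exact {ι : Type*} [DecidableEq ι] (d : ℕ)
    (K : Finset ι) (s : ι → ℝ) (hs : ∀ k ∈ K, 0 ≤ s k)
    (hsupp : (K.filter (fun k => 0 < s k)).Nonempty)
    (v : ι → Fin d → ℝ) (H : ℕ)
    (Ks : Fin H → Finset ι) (hKs : ∀ h, Ks h ⊆ K)
    (N : ℕ) (hN : 1 ≤ N)
    (hfair : ∀ k ∈ K.filter (fun k => 0 < s k),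
      ((Finset.univ : Finset (Fin H)).filter (fun h => k ∈ Ks h)).card = N)
    (hpos : ∀ h : Fin H, 0 < ∑ k ∈ Ks h, s k) :
    ∑ h : Fin H,
        ((∑ k ∈ Ks h, s k) / ∑ n : Fin H, ∑ k' ∈ Ks n, s k') •
          ∑ k ∈ Ks h, (s k / ∑ k' ∈ Ks h, s k') • v k
      = ∑ k ∈ K.filter (fun k => 0 < s k),
          (s k / ∑ k' ∈ K.filter (fun k' => 0 < s k'), s k') • v k := by
  set T : ℝ := ∑ n : Fin H, ∑ k' ∈ Ks n, s k' with hT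
  set Kq := K.filter (fun k => 0 < s k) with hKq
  set Sq : ℝ := ∑ k' ∈ Kq, s k' with hSq
  have hSqpos : 0 < Sq := by
    apply Finset.sum_pos _ hsupp
    intro k hk
    exact (Finset.mem_filter.mp hk).2
  -- k in K but not in Kq has s k = 0
  have hzero : ∀ k ∈ K, k ∉ Kq → s k = 0 := by
    intro k hk hnk
    rcases lt_or_eq_of_le (hs k hk) with h | h
    · exact absurd (Finset.mem_filter.mpr ⟨hk, h⟩) hnk
    · exact h.symm
  -- T = N * Sq
  have hTval : T = (N : ℝ) * Sq := by
    rw [hT, swap_count_smul K H Ks hKs s]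
    rw [hSq, hKq, ← Finset.sum_filter_add_sum_filter_not K (fun k => 0 < s k)]
    have h2 : ∑ k ∈ K.filter (fun k => ¬ 0 < s k),
        (((Finset.univ : Finset (Fin H)).filter (fun h => k ∈ Ks h)).card) • s k = 0 := by
      apply Finset.sum_eq_zero
      intro k hk
      have := Finset.mem_filter.mp hk
      have : s k = 0 := le_antisymm (not_lt.mp this.2) (hs k this.1)
      simp [this]
    rw [h2, add_zero, Finset.mul_sum]
    refine Finset.sum_congr rfl fun k hk => ?_
    rw [hfair k hk, nsmul_eq_mul]
  have hTpos : 0 < T := by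
    rw [hTval]
    exact mul_pos (by exact_mod_cast hN) hSqpos
  -- simplify LHS
  have step1 : ∀ h : Fin H,
      ((∑ k ∈ Ks h, s k) / T) • ∑ k ∈ Ks h, (s k / ∑ k' ∈ Ks h, s k') • v k
        = ∑ k ∈ Ks h, (s k / T) • v k := by
    intro h
    rw [Finset.smul_sum]
    refine Finset.sum_congr rfl fun k _ => ?_
    rw [smul_smul]
    congr 1
    have hSh := (hpos h).ne'
    field_simp
  simp_rw [step1]
  rw [swap_count_smul K H Ks hKs (fun k => (s k / T) • v k)]
  rw [← Finset.sum_filter_add_sum_filter_not K (fun k => 0 < s k)]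
  have h3 : ∑ k ∈ K.filter (fun k => ¬ 0 < s k),
      (((Finset.univ : Finset (Fin H)).filter (fun h => k ∈ Ks h)).card) • ((s k / T) • v k) = 0 := by
    apply Finset.sum_eq_zero
    intro k hk
    have hm := Finset.mem_filter.mp hk
    have : s k = 0 := le_antisymm (not_lt.mp hm.2) (hs k hm.1)
    simp [this]
  rw [h3, add_zero]
  refine Finset.sum_congr rfl fun k hk => ?_
  rw [hfair k hk, ← Nat.cast_smul_eq_nsmul ℝ, smul_smul]
  congr 1
  rw [hTval]
  have hN' : (N : ℝ) ≠ 0 := by exact_mod_cast Nat.one_le_iff_ne_zero.mp hN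
  field_simp
end
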